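/- Let L/K be a finite abelian weakly ramified extension of p-adic fields of odd degree with Galois group G, and let A_{L/K} be the square root of the inverse different. If x ∈ A_{L/K} generates A_{L/K} as an O_K[G]-module, then R(x) = Σ_{g∈G} Tr_{L/K}(x·g(x))·g is a unit in O_K[G]. Moreover, det(Tr_{L/K}(g(x)·h(x)))_{g,h∈G} is a unit of O_K. -/

import Mathlib

open scoped Classical

set_option maxHeartbeats 2000000 in
/-- Let `L/K` be a finite abelian (weakly ramified) extension of `p`-adic
fields of odd degree with Galois group `G`, and `A = A_{L/K}` the square root of the
inverse different (the fractional `O_L`-ideal with `A² = D_{L/K}^{-1}`, the trace dual of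
`O_L`). If `x ∈ A` generates `A` as an `O_K[G]`-module, then
`R(x) = Σ_{g∈G} Tr_{L/K}(x·g(x))·g` is a unit of `O_K[G]`, and
`det(Tr_{L/K}(g(x)·h(x)))_{g,h}` is a unit of `O_K`. -/
theorem stmt_5 (p : ℕ) [Fact p.Prime]
    (K : Type*) [Field K] [Algebra ℚ_[p] K] [FiniteDimensional ℚ_[p] K]
    [Algebra ℤ_[p] K] [IsScalarTower ℤ_[p] ℚ_[p] K]
    (L : Type*) [Field L] [Algebra K L] [FiniteDimensional K L] [IsGalois K L]
    [Algebra ℤ_[p] L] [IsScalarTower ℤ_[p] K L]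
    (hodd : Odd (Module.finrank K L))
    (hab : ∀ σ τ : L ≃ₐ[K] L, σ * τ = τ * σ)
    (A : Submodule (integralClosure ℤ_[p] L) L)
    (hA : ∀ z : L, z ∈ A * A ↔
      ∀ y : L, y ∈ integralClosure ℤ_[p] L →
        Algebra.trace K L (z * y) ∈ integralClosure ℤ_[p] K)
    (x : L) (hxA : x ∈ A)
    (hgen : (A : Set L) = {z : L | ∃ c : (L ≃ₐ[K] L) → K,
      (∀ g : L ≃ₐ[K] L, c g ∈ integralClosure ℤ_[p] K) ∧
      z = ∑ g : L ≃ₐ[K] L, c g • g x}) :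
    (∃ u : (MonoidAlgebra (integralClosure ℤ_[p] K) (L ≃ₐ[K] L))ˣ,
      ∀ g : L ≃ₐ[K] L,
        (((u : MonoidAlgebra (integralClosure ℤ_[p] K) (L ≃ₐ[K] L)).coeff g : K)) =
          Algebra.trace K L (x * g x)) ∧
    ∃ v : (integralClosure ℤ_[p] K)ˣ,
      ((v : integralClosure ℤ_[p] K) : K) =
        Matrix.det (Matrix.of fun g h : L ≃ₐ[K] L => Algebra.trace K L (g x * h x)) := by
  -- Notation
  letI G := L ≃ₐ[K] L
  -- install the `ℚ_[p]`-algebra structure on `L`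
  letI : Algebra ℚ_[p] L := ((algebraMap K L).comp (algebraMap ℚ_[p] K)).toAlgebra
  haveI : IsScalarTower ℚ_[p] K L := IsScalarTower.of_algebraMap_eq fun q => rfl
  haveI : IsScalarTower ℤ_[p] ℚ_[p] L := IsScalarTower.of_algebraMap_eq fun z => by
    show algebraMap ℤ_[p] L z = algebraMap K L (algebraMap ℚ_[p] K (algebraMap ℤ_[p] ℚ_[p] z))
    rw [← IsScalarTower.algebraMap_apply ℤ_[p] ℚ_[p] K, ← IsScalarTower.algebraMap_apply ℤ_[p] K L]
  haveI : FiniteDimensional ℚ_[p] L := Module.Finite.trans K L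
  haveI hDD : IsDedekindDomain (integralClosure ℤ_[p] L) :=
    integralClosure.isDedekindDomain ℤ_[p] ℚ_[p] L
  haveI hFR : IsFractionRing (integralClosure ℤ_[p] L) L :=
    integralClosure.isFractionRing_of_finite_extension ℚ_[p] L
  haveI : Algebra.IsAlgebraic ℤ_[p] L := IsFractionRing.comap_isAlgebraic_iff.mpr
    (inferInstance : Algebra.IsAlgebraic ℚ_[p] L)
  have hinjZL : Function.Injective (algebraMap ℤ_[p] L) := by
    rw [IsScalarTower.algebraMap_eq ℤ_[p] ℚ_[p] L]
    exact (algebraMap ℚ_[p] L).injective.comp (IsFractionRing.injective ℤ_[p] ℚ_[p])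
  haveI : NoZeroSMulDivisors ℤ_[p] L := ⟨fun {c y} h => by rw [Algebra.smul_def, mul_eq_zero] at h; exact h.imp_left fun h => hinjZL (by rw [map_zero]; exact h)⟩
  -- the trace of an integral element is integral
  have htr_int : ∀ y : L, y ∈ integralClosure ℤ_[p] L →
      Algebra.trace K L y ∈ integralClosure ℤ_[p] K := by
    intro y hy
    have h1 : algebraMap K L (Algebra.trace K L y) ∈ integralClosure ℤ_[p] L := by
      rw [trace_eq_sum_automorphisms]
      refine Subalgebra.sum_mem _ fun σ _ => ?_
      exact IsIntegral.map ((σ : L →ₐ[K] L).restrictScalars ℤ_[p]) hy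
    exact (isIntegral_algebraMap_iff
      (FaithfulSMul.algebraMap_injective K L)).mp h1
  -- trace is invariant under automorphisms
  have htrinv : ∀ (σ : G) (z : L), Algebra.trace K L (σ z) = Algebra.trace K L z := by
    intro σ z
    apply FaithfulSMul.algebraMap_injective K L
    rw [trace_eq_sum_automorphisms, trace_eq_sum_automorphisms]
    exact Fintype.sum_bijective (fun τ : G => τ * σ) (Group.mulRight_bijective σ) _ _
      fun τ => rfl
  -- each `g x` lies in `A`
  have hgxA : ∀ g : G, g x ∈ A := by
    intro g
    have : g x ∈ (A : Set L) := by
      rw [hgen]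
      refine ⟨fun h => if h = g then 1 else 0, fun h => ?_, ?_⟩
      · by_cases hh : h = g <;> simp only [hh, if_pos, if_neg, ite_true, ite_false] <;> [exact one_mem _; exact zero_mem _]
      · simp [ite_smul, Finset.sum_ite_eq']
    exact this
  -- integrality of the pairings
  have tprop : ∀ g h : G, Algebra.trace K L (g x * h x) ∈ integralClosure ℤ_[p] K := by
    intro g h
    have := (hA (g x * h x)).mp (Submodule.mul_mem_mul (hgxA g) (hgxA h)) 1 (one_mem _)
    rwa [mul_one] at this
  -- `1 ∈ A * A`, hence `A ≠ ⊥` and `x ≠ 0`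
  have hone : (1 : L) ∈ A * A := (hA 1).mpr fun y hy => by
    rw [one_mul]; exact htr_int y hy
  have hAne : A ≠ ⊥ := by
    intro hbot
    rw [hbot, Submodule.bot_mul] at hone
    exact one_ne_zero ((Submodule.mem_bot _).mp hone)
  have hx0 : x ≠ 0 := by
    intro h0
    apply hAne
    rw [eq_bot_iff]
    intro z hz
    have : z ∈ (A : Set L) := hz
    rw [hgen] at this
    obtain ⟨c, -, hzc⟩ := this
    have : z = 0 := by
      rw [hzc]
      refine Finset.sum_eq_zero fun g _ => ?_
      rw [h0, map_zero, smul_zero]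
    simpa [this] using Submodule.zero_mem ⊥
  -- `A` is the `O_L`-span of the `g x`
  have hAspan : A = Submodule.span (integralClosure ℤ_[p] L) (Set.range fun g : G => g x) := by
    apply le_antisymm
    · intro z hz
      have hz' : z ∈ (A : Set L) := hz
      rw [hgen] at hz'
      obtain ⟨c, hc, rfl⟩ := hz'
      refine Submodule.sum_mem _ fun g _ => ?_
      have hcg : IsIntegral ℤ_[p] (algebraMap K L (c g)) :=
        IsIntegral.map (IsScalarTower.toAlgHom ℤ_[p] K L) (hc g)
      have heq : c g • g x = (⟨algebraMap K L (c g), hcg⟩ : integralClosure ℤ_[p] L) • g x := by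
        show c g • g x = algebraMap K L (c g) * g x
        rw [Algebra.smul_def]
      rw [heq]
      exact Submodule.smul_mem _ _ (Submodule.subset_span ⟨g, rfl⟩)
    · rw [Submodule.span_le]
      rintro _ ⟨g, rfl⟩
      exact hgxA g
  have hAfg : A.FG := by
    rw [hAspan]; exact Submodule.fg_span (Set.finite_range _)
  -- the `g x` span `L` over `K`
  have hspanK : ⊤ ≤ Submodule.span K (Set.range fun g : G => g x) := by
    have hAle : (A : Set L) ⊆ (Submodule.span K (Set.range fun g : G => g x) : Set L) := by
      intro z hz
      rw [hgen] at hz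
      obtain ⟨c, hc, rfl⟩ := hz
      exact Submodule.sum_mem _ fun g _ =>
        Submodule.smul_mem _ _ (Submodule.subset_span ⟨g, rfl⟩)
    intro w _
    obtain ⟨y, d, hd, hyd⟩ : ∃ y : integralClosure ℤ_[p] L, ∃ d : ℤ_[p], d ≠ 0 ∧
        algebraMap ℤ_[p] L d * (w / x) = y := by
      obtain ⟨d, hd, hint⟩ := (Algebra.IsAlgebraic.isAlgebraic (R := ℤ_[p]) (w / x)).exists_integral_multiple
      exact ⟨⟨_, hint⟩, d, hd, (Algebra.smul_def _ _).symm⟩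
    have hyx : (y : L) * x ∈ A := by
      have h6 := A.smul_mem y hxA
      exact h6
    have hd0 : algebraMap ℤ_[p] L d ≠ 0 := fun h => hd (hinjZL (by simpa using h))
    have hw : w = (algebraMap ℤ_[p] K d)⁻¹ • ((y : L) * x) := by
      have h2 : (y : L) = algebraMap ℤ_[p] L d * (w / x) := hyd.symm
      rw [Algebra.smul_def, map_inv₀, ← IsScalarTower.algebraMap_apply, h2]
      field_simp
    rw [hw]
    exact Submodule.smul_mem _ _ (hAle hyx)
  -- the `g x` form a `K`-basis of `L`
  have hcard : Fintype.card G = Module.finrank K L := by rw [Fintype.card_eq_nat_card]; exact IsGalois.card_aut_eq_finrank K L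
  set b : Module.Basis G K L := basisOfTopLeSpanOfCardEqFinrank _ hspanK hcard with hbdef
  have hb : ∀ g : G, b g = g x := fun g => by
    rw [hbdef, coe_basisOfTopLeSpanOfCardEqFinrank]
  -- dual basis for the trace form
  obtain ⟨bd, hbd⟩ : ∃ bd : Module.Basis G K L, ∀ g h : G,
      Algebra.trace K L (bd g * h x) = if h = g then 1 else 0 :=
    ⟨LinearMap.BilinForm.dualBasis _ (traceForm_nondegenerate K L) b, fun g h => by
      rw [← hb h, ← Algebra.traceForm_apply K]
      exact LinearMap.BilinForm.apply_dualBasis_left _ b g h⟩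
  -- cancellation in the group of fractional ideals
  set 𝔄 : FractionalIdeal (nonZeroDivisors (integralClosure ℤ_[p] L)) L :=
    ⟨A, FractionalIdeal.isFractional_of_fg hAfg⟩ with h𝔄def
  have h𝔄coe : (𝔄 : Submodule (integralClosure ℤ_[p] L) L) = A := rfl
  have h𝔄0 : 𝔄 ≠ 0 := fun h => hAne (by
    rw [← h𝔄coe, FractionalIdeal.coeToSubmodule_eq_bot]; exact h)
  have hcancel : ∀ z : L, (∀ a ∈ A, z * a ∈ A * A) → z ∈ A := by
    intro z hz
    have h1 : FractionalIdeal.spanSingleton (nonZeroDivisors (integralClosure ℤ_[p] L)) z * 𝔄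
        ≤ 𝔄 * 𝔄 := by
      rw [FractionalIdeal.mul_le]
      intro i hi j hj
      obtain ⟨r, rfl⟩ := (FractionalIdeal.mem_spanSingleton _).mp hi
      have hjA : j ∈ A := hj
      have hmem : r • (z * j) ∈ A * A := Submodule.smul_mem _ _ (hz j hjA)
      have h2 : (r • z) * j = r • (z * j) := smul_mul_assoc r z j
      rw [h2]
      show r • (z * j) ∈ (𝔄 * 𝔄 : FractionalIdeal _ _)
      rw [← FractionalIdeal.mem_coe, FractionalIdeal.coe_mul, h𝔄coe]
      exact hmem
    have h2 : FractionalIdeal.spanSingleton (nonZeroDivisors (integralClosure ℤ_[p] L)) z ≤ 𝔄 := by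
      have h3 : FractionalIdeal.spanSingleton (nonZeroDivisors (integralClosure ℤ_[p] L)) z
          * 𝔄 * 𝔄⁻¹ ≤ 𝔄 * 𝔄 * 𝔄⁻¹ := by gcongr ?_ * _
      rwa [mul_assoc, mul_assoc, mul_inv_cancel₀ h𝔄0, mul_one, mul_one] at h3
    exact h2 (FractionalIdeal.mem_spanSingleton_self _ z)
  -- each dual basis vector lies in `A`
  have hbdA : ∀ g : G, bd g ∈ A := by
    intro g
    have hpair : ∀ a ∈ A, Algebra.trace K L (bd g * a) ∈ integralClosure ℤ_[p] K := by
      intro a ha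
      have ha' : a ∈ (A : Set L) := ha
      rw [hgen] at ha'
      obtain ⟨c, hc, rfl⟩ := ha'
      have hexp : Algebra.trace K L (bd g * ∑ h : G, c h • h x)
          = ∑ h : G, c h * Algebra.trace K L (bd g * h x) := by
        rw [Finset.mul_sum, map_sum]
        exact Finset.sum_congr rfl fun h _ => by
          rw [mul_smul_comm, map_smul, smul_eq_mul]
      rw [hexp]
      refine Subalgebra.sum_mem _ fun h _ => ?_
      rw [hbd g h]
      by_cases hh : h = g
      · rw [if_pos hh, mul_one]; exact hc h
      · rw [if_neg hh, mul_zero]; exact zero_mem _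
    refine hcancel _ fun a ha => (hA _).mpr fun y hy => ?_
    have hya : (⟨y, hy⟩ : integralClosure ℤ_[p] L) • a ∈ A := A.smul_mem _ ha
    have : ((⟨y, hy⟩ : integralClosure ℤ_[p] L) : L) • a = y * a := rfl
    have hay : a * y ∈ A := by
      rw [mul_comm]
      exact hya
    have h5 : bd g * a * y = bd g * (a * y) := mul_assoc _ _ _
    rw [h5]
    exact hpair _ hay
  -- expand dual basis in terms of the `g x`
  have hbd' : ∀ g : G, ∃ c : G → K, (∀ h, c h ∈ integralClosure ℤ_[p] K) ∧
      bd g = ∑ h : G, c h • h x := by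
    intro g
    have hm : bd g ∈ (A : Set L) := hbdA g
    rw [hgen] at hm
    exact hm
  choose cS hcS1 hcS2 using hbd'
  let ψ : integralClosure ℤ_[p] K →+* K := (Subalgebra.val _).toRingHom
  have hψinj : Function.Injective ψ := Subtype.val_injective
  let TO : Matrix G G (integralClosure ℤ_[p] K) :=
    Matrix.of fun g h => ⟨Algebra.trace K L (g x * h x), tprop g h⟩
  let SO : Matrix G G (integralClosure ℤ_[p] K) :=
    Matrix.of fun h g => ⟨cS g h, hcS1 g h⟩
  -- the key orthogonality computation
  have key : ∀ i j : G, (∑ h : G, Algebra.trace K L (i x * h x) * cS j h)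
      = if i = j then 1 else 0 := by
    intro i j
    have hexp : Algebra.trace K L (i x * bd j)
        = ∑ h : G, cS j h * Algebra.trace K L (i x * h x) := by
      rw [hcS2 j, Finset.mul_sum, map_sum]
      exact Finset.sum_congr rfl fun h _ => by rw [mul_smul_comm, map_smul, smul_eq_mul]
    have h2 : Algebra.trace K L (i x * bd j) = if i = j then 1 else 0 := by
      rw [mul_comm]; exact hbd j i
    rw [← h2, hexp]
    exact Finset.sum_congr rfl fun h _ => mul_comm _ _
  have hTS : TO * SO = 1 := by
    ext i j
    show ((TO * SO) i j : K) = ((1 : Matrix G G (integralClosure ℤ_[p] K)) i j : K)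
    have hL : ((TO * SO) i j : K) = ∑ h : G, Algebra.trace K L (i x * h x) * cS j h := by
      show ψ ((TO * SO) i j) = _
      rw [Matrix.mul_apply, map_sum]
      rfl
    have hR : ((1 : Matrix G G (integralClosure ℤ_[p] K)) i j : K) = if i = j then 1 else 0 := by
      show ψ ((1 : Matrix G G (integralClosure ℤ_[p] K)) i j) = _
      rw [Matrix.one_apply]
      split <;> simp
    rw [hL, hR, key i j]
  have hST : SO * TO = 1 := mul_eq_one_comm.mp hTS
  have hdet : TO.det * SO.det = 1 := by rw [← Matrix.det_mul, hTS, Matrix.det_one]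
  -- translation invariance of `TO` and `SO`
  have hTOinv : ∀ u g h : G, TO (u*g) (u*h) = TO g h := by
    intro u g h
    apply Subtype.ext
    show Algebra.trace K L ((u*g) x * (u*h) x) = Algebra.trace K L (g x * h x)
    have hc : (u*g) x * ((u*h) x) = u (g x * h x) := by
      rw [AlgEquiv.mul_apply, AlgEquiv.mul_apply, map_mul]
    rw [hc, htrinv]
  have hSOinv : ∀ u g h : G, SO (u*g) (u*h) = SO g h := by
    intro u g h
    let SO' : Matrix G G (integralClosure ℤ_[p] K) := Matrix.of fun g h => SO (u*g) (u*h)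
    have hTS' : TO * SO' = 1 := by
      ext i j
      rw [Matrix.mul_apply]
      have hre : ∑ w : G, TO i w * SO' w j = ∑ w : G, TO (u*i) w * SO w (u*j) := by
        refine Fintype.sum_bijective (fun w => u * w) (Group.mulLeft_bijective u) _ _ fun w => ?_
        show TO i w * SO (u*w) (u*j) = TO (u*i) (u*w) * SO (u*w) (u*j)
        rw [hTOinv u i w]
      rw [hre, ← Matrix.mul_apply, hTS]
      by_cases hij : i = j
      · rw [hij, Matrix.one_apply_eq, Matrix.one_apply_eq]
      · rw [Matrix.one_apply_ne (fun hc => hij (mul_left_cancel hc)),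
          Matrix.one_apply_ne hij]
    have hST' : SO' * TO = 1 := mul_eq_one_comm.mp hTS'
    have hSS : SO' = SO := by
      calc SO' = SO' * (TO * SO) := by rw [hTS, mul_one]
      _ = (SO' * TO) * SO := by rw [mul_assoc]
      _ = SO := by rw [hST', one_mul]
    exact congrFun (congrFun hSS g) h
  -- coefficient extraction in the group algebra
  have hcoef : ∀ (f : G → integralClosure ℤ_[p] K) (g : G),
      (∑ g' : G, MonoidAlgebra.single g' (f g')).coeff g = f g := by
    intro f g
    rw [MonoidAlgebra.coeff_sum, Finsupp.finset_sum_apply]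
    simp_rw [MonoidAlgebra.coeff_single, Finsupp.single_apply]
    rw [Finset.sum_ite_eq' Finset.univ g f, if_pos (Finset.mem_univ g)]
  have hmulcoef : ∀ (fR fY : G → integralClosure ℤ_[p] K) (k : G),
      ((∑ g : G, MonoidAlgebra.single g (fR g)) * (∑ h : G, MonoidAlgebra.single h (fY h))).coeff k
        = ∑ g : G, fR g * fY (g⁻¹ * k) := by
    intro fR fY k
    rw [Finset.sum_mul_sum]
    simp_rw [MonoidAlgebra.single_mul_single]
    rw [MonoidAlgebra.coeff_sum, Finsupp.finset_sum_apply]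
    refine Finset.sum_congr rfl fun g _ => ?_
    rw [MonoidAlgebra.coeff_sum, Finsupp.finset_sum_apply]
    rw [Finset.sum_eq_single (g⁻¹ * k)]
    · rw [MonoidAlgebra.coeff_single, Finsupp.single_apply, if_pos (by rw [mul_inv_cancel_left])]
    · intro h _ hne
      rw [MonoidAlgebra.coeff_single, Finsupp.single_apply, if_neg]
      intro hc
      exact hne (by rw [← hc, inv_mul_cancel_left])
    · intro hmem; exact absurd (Finset.mem_univ _) hmem
  let Rx : MonoidAlgebra (integralClosure ℤ_[p] K) G :=
    ∑ g : G, MonoidAlgebra.single g (TO 1 g)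
  let Yx : MonoidAlgebra (integralClosure ℤ_[p] K) G :=
    ∑ g : G, MonoidAlgebra.single g (SO 1 g)
  have hone' : ∀ k : G, (1 : MonoidAlgebra (integralClosure ℤ_[p] K) G).coeff k
      = if (1 : G) = k then 1 else 0 := by
    intro k
    rw [MonoidAlgebra.one_def, MonoidAlgebra.coeff_single, Finsupp.single_apply]
  have hRY : Rx * Yx = 1 := by
    refine MonoidAlgebra.ext (Finsupp.ext fun k => ?_)
    show ((∑ g : G, MonoidAlgebra.single g (TO 1 g)) *
        (∑ h : G, MonoidAlgebra.single h (SO 1 h))).coeff k = _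
    rw [hmulcoef (fun g => TO 1 g) (fun g => SO 1 g) k]
    have hs : ∀ g : G, SO 1 (g⁻¹ * k) = SO g k := by
      intro g
      have := hSOinv g 1 (g⁻¹ * k)
      rw [mul_one, mul_inv_cancel_left] at this
      exact this.symm
    calc ∑ g : G, TO 1 g * SO 1 (g⁻¹ * k) = ∑ g : G, TO 1 g * SO g k :=
          Finset.sum_congr rfl fun g _ => by rw [hs g]
      _ = (TO * SO) 1 k := (Matrix.mul_apply).symm
      _ = (1 : Matrix G G (integralClosure ℤ_[p] K)) 1 k := by rw [hTS]
      _ = _ := by rw [Matrix.one_apply, hone' k]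
  have hYR : Yx * Rx = 1 := by
    refine MonoidAlgebra.ext (Finsupp.ext fun k => ?_)
    show ((∑ g : G, MonoidAlgebra.single g (SO 1 g)) *
        (∑ h : G, MonoidAlgebra.single h (TO 1 h))).coeff k = _
    rw [hmulcoef (fun g => SO 1 g) (fun g => TO 1 g) k]
    have ht : ∀ g : G, TO 1 (g⁻¹ * k) = TO g k := by
      intro g
      have := hTOinv g 1 (g⁻¹ * k)
      rw [mul_one, mul_inv_cancel_left] at this
      exact this.symm
    calc ∑ g : G, SO 1 g * TO 1 (g⁻¹ * k) = ∑ g : G, SO 1 g * TO g k :=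
          Finset.sum_congr rfl fun g _ => by rw [ht g]
      _ = (SO * TO) 1 k := (Matrix.mul_apply).symm
      _ = (1 : Matrix G G (integralClosure ℤ_[p] K)) 1 k := by rw [hST]
      _ = _ := by rw [Matrix.one_apply, hone' k]
  constructor
  · refine ⟨⟨Rx, Yx, hRY, hYR⟩, fun g => ?_⟩
    show ((Rx : MonoidAlgebra (integralClosure ℤ_[p] K) G).coeff g : K) = _
    have : Rx.coeff g = TO 1 g := hcoef (fun g => TO 1 g) g
    rw [this]
    show Algebra.trace K L ((1 : G) x * g x) = Algebra.trace K L (x * g x)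
    rw [AlgEquiv.one_apply]
  · refine ⟨⟨TO.det, SO.det, hdet, by rwa [mul_comm] at hdet⟩, ?_⟩
    show ψ TO.det = _
    rw [RingHom.map_det]
    congr 1
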